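/- Let (γ, τ) be a twisted coaction of a bimonoid B on a monoid A in a braided monoidal category 𝒱, and let z := ((j⊗1_B)∘λ_B⁻¹)•γ : B⊗A → A⊗B. Then z satisfies the two distributive-law equations of a mixed opwreath: (i) z ∘ (1_B⊗m) = (m⊗1_B) ∘ (1_A⊗z) ∘ (z⊗1_A) : B⊗A⊗A → A⊗B, and (ii) z ∘ (1_B⊗j) ∘ ρ_B⁻¹ = (j⊗1_B) ∘ λ_B⁻¹ : B → A⊗B. -/

import Mathlib

open CategoryTheory MonoidalCategory

variable {𝒱 : Type*} [Category 𝒱] [MonoidalCategory 𝒱] [BraidedCategory 𝒱]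

/-- The multiplication of the braided tensor product of two monoids `(X, mX)` and
`(Y, mY)`: `(mX ⊗ mY) ∘ (1_X ⊗ σ_{Y,X} ⊗ 1_Y)`, written with explicit associators. -/
def tensorMul (X Y : 𝒱) (mX : X ⊗ X ⟶ X) (mY : Y ⊗ Y ⟶ Y) :
    (X ⊗ Y) ⊗ (X ⊗ Y) ⟶ X ⊗ Y :=
  (α_ X Y (X ⊗ Y)).hom ≫ (X ◁ (α_ Y X Y).inv) ≫ (X ◁ ((β_ Y X).hom ▷ Y)) ≫
    (X ◁ (α_ X Y Y).hom) ≫ (α_ X X (Y ⊗ Y)).inv ≫ (mX ⊗ₘ mY)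

/-- The map `z := ((j ⊗ 1_B) ∘ λ_B⁻¹) • γ : B ⊗ A ⟶ A ⊗ B` built from a twisted
coaction `γ`; the dot product is taken in the braided tensor-product monoid `A ⊗ B`. -/
def zMap (A B : 𝒱) (m : A ⊗ A ⟶ A) (j : 𝟙_ 𝒱 ⟶ A) (mB : B ⊗ B ⟶ B)
    (γ : A ⟶ A ⊗ B) : B ⊗ A ⟶ A ⊗ B :=
  (((λ_ B).inv ≫ (j ▷ B)) ⊗ₘ γ) ≫ tensorMul A B m mB

/-- The map `d := (((j ⊗ Δ) ∘ λ_B⁻¹) • τ) ∘ ρ_B⁻¹ : B ⟶ (A ⊗ B) ⊗ B` built from a twisted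
coaction `(γ, τ)`; the dot product is taken in the braided tensor-product monoid
`(A ⊗ B) ⊗ B`. -/
def dMap (A B : 𝒱) (m : A ⊗ A ⟶ A) (j : 𝟙_ 𝒱 ⟶ A) (mB : B ⊗ B ⟶ B)
    (Δ : B ⟶ B ⊗ B) (τ : 𝟙_ 𝒱 ⟶ (A ⊗ B) ⊗ B) : B ⟶ (A ⊗ B) ⊗ B :=
  (ρ_ B).inv ≫ (((λ_ B).inv ≫ (j ⊗ₘ Δ) ≫ (α_ A B B).inv) ⊗ₘ τ) ≫
    tensorMul (A ⊗ B) B (tensorMul A B m mB) mB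

lemma tensorMul_eq (X Y : 𝒱) (mX : X ⊗ X ⟶ X) (mY : Y ⊗ Y ⟶ Y) :
    tensorMul X Y mX mY = tensorμ X Y X Y ≫ (mX ⊗ₘ mY) := by
  simp [tensorMul, tensorμ, Category.assoc]

/-- dot-product associativity in a monoid object. -/
lemma dot_assoc (M : Mon 𝒱) {X Y Z : 𝒱} (f : X ⟶ M.X) (g : Y ⟶ M.X) (h : Z ⟶ M.X) :
    (((f ⊗ₘ g) ≫ MonObj.mul (X := M.X)) ⊗ₘ h) ≫ MonObj.mul (X := M.X)
      = (α_ X Y Z).hom ≫ (f ⊗ₘ ((g ⊗ₘ h) ≫ MonObj.mul (X := M.X))) ≫ MonObj.mul (X := M.X) := by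
  calc (((f ⊗ₘ g) ≫ MonObj.mul (X := M.X)) ⊗ₘ h) ≫ MonObj.mul (X := M.X)
      = ((f ⊗ₘ g) ⊗ₘ h) ≫ (MonObj.mul (X := M.X) ▷ M.X) ≫ MonObj.mul (X := M.X) := by
        rw [← tensorHom_id, tensorHom_comp_tensorHom_assoc, Category.comp_id]
    _ = ((f ⊗ₘ g) ⊗ₘ h) ≫ (α_ M.X M.X M.X).hom ≫ (M.X ◁ MonObj.mul (X := M.X)) ≫ MonObj.mul (X := M.X) := by
        rw [MonObj.mul_assoc M.X]
    _ = (α_ X Y Z).hom ≫ (f ⊗ₘ (g ⊗ₘ h)) ≫ (M.X ◁ MonObj.mul (X := M.X)) ≫ MonObj.mul (X := M.X) := by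
        rw [associator_naturality_assoc]
    _ = (α_ X Y Z).hom ≫ (f ⊗ₘ ((g ⊗ₘ h) ≫ MonObj.mul (X := M.X))) ≫ MonObj.mul (X := M.X) := by
        rw [tensorHom_def f ((g ⊗ₘ h) ≫ MonObj.mul (X := M.X)), tensorHom_def f (g ⊗ₘ h)]
        simp [MonoidalCategory.whiskerLeft_comp]

/-- the "unit-free" form of `zMap` -/
def zSimp (A B : 𝒱) (mB : B ⊗ B ⟶ B) (γ : A ⟶ A ⊗ B) : B ⊗ A ⟶ A ⊗ B :=
  (B ◁ γ) ≫ (α_ B A B).inv ≫ ((β_ B A).hom ▷ B) ≫ (α_ A B B).hom ≫ (A ◁ mB)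

lemma zMap_eq (A B : 𝒱) (m : A ⊗ A ⟶ A) (j : 𝟙_ 𝒱 ⟶ A) (mB : B ⊗ B ⟶ B)
    (γ : A ⟶ A ⊗ B) (hA_one_mul : (j ▷ A) ≫ m = (λ_ A).hom) :
    zMap A B m j mB γ = zSimp A B mB γ := by
  rw [zMap, tensorMul_eq, tensorHom_def', Category.assoc, MonoidalCategory.comp_whiskerRight,
    Category.assoc]
  rw [← tensorHom_id j, tensorμ_natural_left_assoc]
  rw [tensorHom_comp_tensorHom, hA_one_mul]
  rw [zSimp]
  congr 1
  simp only [id_whiskerRight, Category.id_comp]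
  rw [tensorHom_def (λ_ A).hom mB]
  simp only [tensorμ]
  monoidal

lemma mu_eq_zSimp (A B : 𝒱) (m : A ⊗ A ⟶ A) (mB : B ⊗ B ⟶ B) :
    tensorμ A B A B ≫ (m ⊗ₘ mB)
      = (α_ A B (A ⊗ B)).hom ≫
          (A ◁ ((α_ B A B).inv ≫ ((β_ B A).hom ▷ B) ≫ (α_ A B B).hom ≫ (A ◁ mB))) ≫
          (α_ A A B).inv ≫ (m ▷ B) := by
  simp only [tensorμ, MonoidalCategory.whiskerLeft_comp, Category.assoc]
  rw [tensorHom_def m mB]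
  congr 3
  rw [← whisker_exchange, ← associator_inv_naturality_right_assoc]

lemma key_lemma (A B : 𝒱) (m : A ⊗ A ⟶ A) (mB : B ⊗ B ⟶ B) (γ : A ⟶ A ⊗ B) :
    ((A ⊗ B) ◁ γ) ≫ tensorμ A B A B ≫ (m ⊗ₘ mB)
      = (α_ A B A).hom ≫ (A ◁ zSimp A B mB γ) ≫ (α_ A A B).inv ≫ (m ▷ B) := by
  rw [zSimp]
  simp only [MonoidalCategory.whiskerLeft_comp, Category.assoc]
  rw [← associator_naturality_right_assoc, mu_eq_zSimp]
  simp only [MonoidalCategory.whiskerLeft_comp, Category.assoc]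


/-- For a twisted coaction `(γ, τ)` of a bimonoid `B` on a monoid `A`
in a braided monoidal category, the map `z := ((j ⊗ 1_B) ∘ λ_B⁻¹) • γ : B ⊗ A ⟶ A ⊗ B`
satisfies the two distributive-law equations of a mixed opwreath. -/
theorem twisted_coaction_distributive_law
    (A B : 𝒱) (m : A ⊗ A ⟶ A) (j : 𝟙_ 𝒱 ⟶ A)
    (mB : B ⊗ B ⟶ B) (jB : 𝟙_ 𝒱 ⟶ B) (Δ : B ⟶ B ⊗ B) (εB : B ⟶ 𝟙_ 𝒱)
    -- `A` is a monoid
    (hA_assoc : (m ▷ A) ≫ m = (α_ A A A).hom ≫ (A ◁ m) ≫ m)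
    (hA_one_mul : (j ▷ A) ≫ m = (λ_ A).hom)
    (hA_mul_one : (A ◁ j) ≫ m = (ρ_ A).hom)
    -- `B` is a monoid
    (hB_assoc : (mB ▷ B) ≫ mB = (α_ B B B).hom ≫ (B ◁ mB) ≫ mB)
    (hB_one_mul : (jB ▷ B) ≫ mB = (λ_ B).hom)
    (hB_mul_one : (B ◁ jB) ≫ mB = (ρ_ B).hom)
    -- `B` is a comonoid
    (hB_coassoc : Δ ≫ (Δ ▷ B) ≫ (α_ B B B).hom = Δ ≫ (B ◁ Δ))
    (hB_counit_left : Δ ≫ (εB ▷ B) ≫ (λ_ B).hom = 𝟙 B)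
    (hB_counit_right : Δ ≫ (B ◁ εB) ≫ (ρ_ B).hom = 𝟙 B)
    -- `B` is a bimonoid: `Δ` and `εB` are monoid morphisms
    (hB_compat_mul : mB ≫ Δ = (Δ ⊗ₘ Δ) ≫ tensorMul B B mB mB)
    (hB_compat_one : jB ≫ Δ = (λ_ (𝟙_ 𝒱)).inv ≫ (jB ⊗ₘ jB))
    (hB_counit_mul : mB ≫ εB = (εB ⊗ₘ εB) ≫ (λ_ (𝟙_ 𝒱)).hom)
    (hB_counit_one : jB ≫ εB = 𝟙 (𝟙_ 𝒱))
    -- twisted coaction data: `γ` is a monoid morphism, `τ` a normalized `2`-cocycle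
    (γ : A ⟶ A ⊗ B) (τ : 𝟙_ 𝒱 ⟶ (A ⊗ B) ⊗ B)
    (hγ_mul : m ≫ γ = (γ ⊗ₘ γ) ≫ tensorMul A B m mB)
    (hγ_one : j ≫ γ = (λ_ (𝟙_ 𝒱)).inv ≫ (j ⊗ₘ jB))
    (hcounital : γ ≫ (A ◁ εB) ≫ (ρ_ A).hom = 𝟙 A)
    (hτ_coassoc :
      (λ_ A).inv ≫ (τ ⊗ₘ (γ ≫ (γ ▷ B))) ≫ tensorMul (A ⊗ B) B (tensorMul A B m mB) mB
        = (ρ_ A).inv ≫ ((γ ≫ (A ◁ Δ) ≫ (α_ A B B).inv) ⊗ₘ τ) ≫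
            tensorMul (A ⊗ B) B (tensorMul A B m mB) mB)
    (hcocycle :
      (λ_ (𝟙_ 𝒱)).inv ≫
          ((τ ≫ ((A ◁ Δ) ▷ B) ≫ ((α_ A B B).inv ▷ B)) ⊗ₘ ((λ_ (𝟙_ 𝒱)).inv ≫ (τ ⊗ₘ jB))) ≫
          tensorMul ((A ⊗ B) ⊗ B) B (tensorMul (A ⊗ B) B (tensorMul A B m mB) mB) mB
        = (λ_ (𝟙_ 𝒱)).inv ≫
          ((τ ≫ ((A ⊗ B) ◁ Δ) ≫ (α_ (A ⊗ B) B B).inv) ⊗ₘ (τ ≫ ((γ ▷ B) ▷ B))) ≫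
          tensorMul ((A ⊗ B) ⊗ B) B (tensorMul (A ⊗ B) B (tensorMul A B m mB) mB) mB)
    (hnormal₁ : τ ≫ ((A ⊗ B) ◁ εB) ≫ (ρ_ (A ⊗ B)).hom = (λ_ (𝟙_ 𝒱)).inv ≫ (j ⊗ₘ jB))
    (hnormal₂ : τ ≫ ((A ◁ εB) ▷ B) ≫ ((ρ_ A).hom ▷ B) = (λ_ (𝟙_ 𝒱)).inv ≫ (j ⊗ₘ jB)) :
    ((α_ B A A).hom ≫ (B ◁ m) ≫ zMap A B m j mB γ
        = (zMap A B m j mB γ ▷ A) ≫ (α_ A B A).hom ≫ (A ◁ zMap A B m j mB γ)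
            ≫ (α_ A A B).inv ≫ (m ▷ B)) ∧
    ((ρ_ B).inv ≫ (B ◁ j) ≫ zMap A B m j mB γ = (λ_ B).inv ≫ (j ▷ B)) := by
  letI iA : MonObj A :=
    { one := j, mul := m,
      one_mul := hA_one_mul, mul_one := hA_mul_one, mul_assoc := hA_assoc }
  letI iB : MonObj B :=
    { one := jB, mul := mB,
      one_mul := hB_one_mul, mul_one := hB_mul_one, mul_assoc := hB_assoc }
  let M : Mon 𝒱 := Mon.mk (A ⊗ B)
  have hMX : M.X = A ⊗ B := rfl
  have hMmul : MonObj.mul (X := M.X) = tensorμ A B A B ≫ (m ⊗ₘ mB) := rfl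
  have hMone : MonObj.one (X := M.X) = (λ_ (𝟙_ 𝒱)).inv ≫ (j ⊗ₘ jB) := rfl
  set u : B ⟶ A ⊗ B := (λ_ B).inv ≫ (j ▷ B) with hu
  have hz : zMap A B m j mB γ = (u ⊗ₘ γ) ≫ MonObj.mul (X := M.X) := by
    rw [zMap, tensorMul_eq, hMmul]
  constructor
  · -- equation (i)
    calc (α_ B A A).hom ≫ (B ◁ m) ≫ zMap A B m j mB γ
        = (α_ B A A).hom ≫ (u ⊗ₘ (m ≫ γ)) ≫ MonObj.mul (X := M.X) := by
          rw [hz, ← id_tensorHom, tensorHom_comp_tensorHom_assoc, Category.id_comp]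
      _ = (α_ B A A).hom ≫ (u ⊗ₘ ((γ ⊗ₘ γ) ≫ MonObj.mul (X := M.X))) ≫ MonObj.mul (X := M.X) := by
          rw [hγ_mul, tensorMul_eq, hMmul]
      _ = (((u ⊗ₘ γ) ≫ MonObj.mul (X := M.X)) ⊗ₘ γ) ≫ MonObj.mul (X := M.X) := (dot_assoc M u γ γ).symm
      _ = (zMap A B m j mB γ ▷ A) ≫ ((A ⊗ B) ◁ γ) ≫ MonObj.mul (X := M.X) := by
          rw [← hz, MonoidalCategory.tensorHom_def, Category.assoc]
      _ = (zMap A B m j mB γ ▷ A) ≫ (α_ A B A).hom ≫ (A ◁ zMap A B m j mB γ)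
            ≫ (α_ A A B).inv ≫ (m ▷ B) := by
          rw [hMmul, key_lemma, zMap_eq A B m j mB γ hA_one_mul]
  · -- equation (ii)
    rw [hz, ← id_tensorHom, tensorHom_comp_tensorHom_assoc, Category.id_comp, hγ_one, ← hMone]
    rw [MonObj.mul_one_hom (M := M.X) u, Iso.inv_hom_id_assoc]
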